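/- Let φ_1, φ_2, φ_3 be real numbers with cos(φ_k) ≠ 0 for all k and cos(φ_ℓ − φ_m) ≠ 0 for all ℓ ≠ m. Define J_{ℓm} = −tan(φ_ℓ − φ_m)·tan(φ_k) whenever (k,ℓ,m) is a cyclic permutation of (1,2,3). Then J_{12} + J_{23} + J_{31} + J_{12}·J_{23}·J_{31} = 0. -/

import Mathlib

open Real

/-- The Sklyanin compatibility relation
J₁₂ + J₂₃ + J₃₁ + J₁₂·J₂₃·J₃₁ = 0 for J_{ℓm} = −tan(φ_ℓ−φ_m)·tan(φ_k). -/
theorem stmt_2 (φ₁ φ₂ φ₃ : ℝ)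
    (h1 : cos φ₁ ≠ 0) (h2 : cos φ₂ ≠ 0) (h3 : cos φ₃ ≠ 0)
    (h12 : cos (φ₁ - φ₂) ≠ 0) (h23 : cos (φ₂ - φ₃) ≠ 0) (h31 : cos (φ₃ - φ₁) ≠ 0) :
    (-tan (φ₁ - φ₂) * tan φ₃) + (-tan (φ₂ - φ₃) * tan φ₁) + (-tan (φ₃ - φ₁) * tan φ₂)
      + (-tan (φ₁ - φ₂) * tan φ₃) * (-tan (φ₂ - φ₃) * tan φ₁) * (-tan (φ₃ - φ₁) * tan φ₂)
      = 0 := by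
  simp only [tan_eq_sin_div_cos] at *
  rw [sin_sub, sin_sub, sin_sub, cos_sub, cos_sub, cos_sub] at *
  set A := cos φ₁ * cos φ₂ + sin φ₁ * sin φ₂ with hA
  set B := cos φ₂ * cos φ₃ + sin φ₂ * sin φ₃ with hB
  set C := cos φ₃ * cos φ₁ + sin φ₃ * sin φ₁ with hC
  field_simp
  rw [hA, hB, hC]
  ring
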